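/- If a semicomplete digraph G has an (l,k)-degree tangle, then pw(G) ≥ (l − k − 1)/2. -/
import Mathlib


namespace AlmostSemicomplete

variable {V : Type} [Fintype V] [DecidableEq V]

/-- The closed out-neighborhood `N⁺[U]`. -/
def closedOut (E : V → V → Prop) [DecidableRel E] (U : Finset V) : Finset V :=
  U.biUnion fun u => insert u (Finset.univ.filter fun w => E u w)

/-- The closed in-neighborhood `N⁻[U]`. -/
def closedIn (E : V → V → Prop) [DecidableRel E] (U : Finset V) : Finset V :=
  U.biUnion fun u => insert u (Finset.univ.filter fun w => E w u)

/-- The open out-neighborhood `N⁺(U)`. -/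
def openOut (E : V → V → Prop) [DecidableRel E] (U : Finset V) : Finset V :=
  closedOut E U \ U

/-- The open in-neighborhood `N⁻(U)`. -/
def openIn (E : V → V → Prop) [DecidableRel E] (U : Finset V) : Finset V :=
  closedIn E U \ U

/-- `d⁺(U)`, the number of out-neighbors of the set `U`. -/
def dOut (E : V → V → Prop) [DecidableRel E] (U : Finset V) : ℕ := (openOut E U).card

/-- `d⁻(U)`, the number of in-neighbors of the set `U`. -/
def dIn (E : V → V → Prop) [DecidableRel E] (U : Finset V) : ℕ := (openIn E U).card

/-- Out-neighbors of a vertex. -/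
def NoutV (E : V → V → Prop) [DecidableRel E] (v : V) : Finset V :=
  Finset.univ.filter fun w => E v w

/-- In-neighbors of a vertex. -/
def NinV (E : V → V → Prop) [DecidableRel E] (v : V) : Finset V :=
  Finset.univ.filter fun w => E w v

/-- Out-degree of a vertex. -/
def dOutV (E : V → V → Prop) [DecidableRel E] (v : V) : ℕ := (NoutV E v).card

/-- In-degree of a vertex. -/
def dInV (E : V → V → Prop) [DecidableRel E] (v : V) : ℕ := (NinV E v).card

/-- A separation of a digraph: `A ∪ B = V` and no edge from `A ∖ B` to `B ∖ A`. -/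
def IsSep (E : V → V → Prop) (A B : Finset V) : Prop :=
  A ∪ B = Finset.univ ∧ ∀ a ∈ A, a ∉ B → ∀ b ∈ B, b ∉ A → ¬ E a b

/-- An `S`–`T` separation. -/
def IsSTSep (E : V → V → Prop) (S T A B : Finset V) : Prop :=
  IsSep E A B ∧ S ∩ B = ∅ ∧ T ∩ A = ∅

/-- A minimum `S`–`T` separation, i.e. one of smallest order `|A ∩ B|`. -/
def IsMinSTSep (E : V → V → Prop) (S T X Y : Finset V) : Prop :=
  IsSTSep E S T X Y ∧ ∀ A B : Finset V, IsSTSep E S T A B → (X ∩ Y).card ≤ (A ∩ B).card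

/-- A separation chain: a list of separations with the first components nondecreasing
and the second components nonincreasing. -/
def IsSepChain (E : V → V → Prop) (C : List (Finset V × Finset V)) : Prop :=
  (∀ p ∈ C, IsSep E p.1 p.2) ∧ List.Chain' (fun p q => p.1 ⊆ q.1 ∧ q.2 ⊆ p.2) C

/-- A separation chain is gapless if consecutive separations differ by at most one vertex
on at least one side. -/
def Gapless (C : List (Finset V × Finset V)) : Prop :=
  List.Chain' (fun p q => (q.1 \ p.1).card ≤ 1 ∨ (p.2 \ q.2).card ≤ 1) C

/-- A separation chain is nice if consecutive separations differ by at most one vertex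
on both sides. -/
def Nice (C : List (Finset V × Finset V)) : Prop :=
  List.Chain' (fun p q => (q.1 \ p.1).card ≤ 1 ∧ (p.2 \ q.2).card ≤ 1) C

/-- An `S`–`T` chain: a separation chain whose first separation has second component
`V ∖ S` and whose last separation has first component `V ∖ T`. -/
def IsSTChain (E : V → V → Prop) (S T : Finset V) (C : List (Finset V × Finset V)) : Prop :=
  IsSepChain E C ∧ C.head?.map Prod.snd = some (Finset.univ \ S) ∧
    C.getLast?.map Prod.fst = some (Finset.univ \ T)

/-- An `S`–`T` chain is tight if `A_0 = N⁺[S]` and `B_r = N⁻[T]`. -/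
def Tight (E : V → V → Prop) [DecidableRel E] (S T : Finset V)
    (C : List (Finset V × Finset V)) : Prop :=
  C.head?.map Prod.fst = some (closedOut E S) ∧
    C.getLast?.map Prod.snd = some (closedIn E T)

/-- The order of a separation chain: the maximum order of its member separations. -/
def chainOrder (C : List (Finset V × Finset V)) : ℕ :=
  (C.map fun p => (p.1 ∩ p.2).card).foldr max 0

/-- The chain has order at most `k`. -/
def orderLE (C : List (Finset V × Finset V)) (k : ℕ) : Prop :=
  ∀ p ∈ C, (p.1 ∩ p.2).card ≤ k

/-- A path decomposition of a digraph. -/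
def IsPathDecomp {m : ℕ} (E : V → V → Prop) (X : Fin m → Finset V) : Prop :=
  (∀ v : V, ∃ i, v ∈ X i) ∧
  (∀ u v : V, E u v → ∃ i j : Fin m, j ≤ i ∧ u ∈ X i ∧ v ∈ X j) ∧
  (∀ (v : V) (i j k : Fin m), i ≤ j → j ≤ k → v ∈ X i → v ∈ X k → v ∈ X j)

/-- The width of a path decomposition: maximum bag size minus one. -/
def pdWidth {m : ℕ} (X : Fin m → Finset V) : ℕ :=
  (Finset.univ.sup fun i => (X i).card) - 1

/-- The pathwidth of a digraph. -/
noncomputable def pathwidth (E : V → V → Prop) : ℕ :=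
  sInf {k | ∃ (m : ℕ) (X : Fin m → Finset V), IsPathDecomp E X ∧ pdWidth X = k}

/-- An `h`-semicomplete digraph: every vertex has at most `h` non-neighbors. -/
def HSemicomplete (E : V → V → Prop) [DecidableRel E] (h : ℕ) : Prop :=
  ∀ v : V, (Finset.univ.filter fun u => u ≠ v ∧ ¬ E u v ∧ ¬ E v u).card ≤ h

/-- A semicomplete digraph: between any two distinct vertices there is an edge in
at least one direction. -/
def Semicomplete (E : V → V → Prop) : Prop := ∀ u v : V, u ≠ v → E u v ∨ E v u

/-- A `k`-admissible pair `(S, T)`. -/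
def kAdmissible (E : V → V → Prop) [DecidableRel E] (k : ℕ) (S T : Finset V) : Prop :=
  closedOut E S ∩ T = ∅ ∧ dOut E S ≤ k ∧ dIn E T ≤ k

/-- The potential `μ(S,T) = 2|V ∖ (N⁺[S] ∪ N⁻[T])| + |N⁺(S) Δ N⁻(T)|`. -/
def mu (E : V → V → Prop) [DecidableRel E] (S T : Finset V) : ℕ :=
  2 * (Finset.univ \ (closedOut E S ∪ closedIn E T)).card +
    (symmDiff (openOut E S) (openIn E T)).card

/-- The wildness of a vertex. -/
def wld (E : V → V → Prop) [DecidableRel E] (v : V) : ℕ :=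
  ((Finset.univ.filter fun u => dOutV E u ≤ dOutV E v) \ NoutV E v).card

/-- A `(d, l, k)`-degree tangle. -/
def IsDegTangle (E : V → V → Prop) [DecidableRel E] (d l k : ℕ) (T : Finset V) : Prop :=
  T.card = l ∧ ∀ v ∈ T, d ≤ dOutV E v ∧ dOutV E v ≤ d + k

/-- A `(d, l, k)`-matching tangle. -/
def IsMatchTangle (E : V → V → Prop) [DecidableRel E] (d l k : ℕ)
    (T₁ T₂ : Finset V) : Prop :=
  T₁.card = l ∧ T₂.card = l ∧ (∀ v ∈ T₁, dOutV E v ≤ d) ∧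
    (∀ v ∈ T₂, d + k + 1 ≤ dOutV E v) ∧
    ∃ φ : V → V, Set.BijOn φ ↑T₁ ↑T₂ ∧ ∀ v ∈ T₁, E v (φ v)

/-- A `(d, l, w)`-spider. -/
def IsSpider (E : V → V → Prop) [DecidableRel E] (d l w : ℕ) (T : Finset V)
    (L R : V → Finset V) : Prop :=
  l ≤ T.card ∧ ∀ v ∈ T,
    L v ⊆ NinV E v ∧ 3 * l ≤ (L v).card ∧ (∀ u ∈ L v, dOutV E u ≤ d) ∧
    R v ⊆ NoutV E v ∧ 3 * l ≤ (R v).card ∧ (∀ u ∈ R v, d + w ≤ dOutV E u)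

/-- Tameness of a left-side vertex of a `(d,l,w)`-spider:
`wld(u) ≤ 3l + d + w − d⁺(u) + 2·pw(G)`, stated additively. -/
def LeftTame (E : V → V → Prop) [DecidableRel E] (d l w : ℕ) (u : V) : Prop :=
  wld E u + dOutV E u ≤ 3 * l + d + w + 2 * pathwidth E

/-- Tameness of a right-side vertex of a `(d,l,w)`-spider:
`wld(u) ≤ 3l + d⁺(u) − d + 2·pw(G)`, stated additively. -/
def RightTame (E : V → V → Prop) [DecidableRel E] (d l w : ℕ) (u : V) : Prop :=
  wld E u + d ≤ 3 * l + dOutV E u + 2 * pathwidth E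

/-- A tame `(d, l, w)`-spider: each `L_v` and each `R_v` contains at least `2l`
tame vertices. -/
def IsTameSpider (E : V → V → Prop) [DecidableRel E] (d l w : ℕ) (T : Finset V)
    (L R : V → Finset V) : Prop :=
  IsSpider E d l w T L R ∧ ∀ v ∈ T,
    (∃ L' ⊆ L v, 2 * l ≤ L'.card ∧ ∀ u ∈ L', LeftTame E d l w u) ∧
    (∃ R' ⊆ R v, 2 * l ≤ R'.card ∧ ∀ u ∈ R', RightTame E d l w u)



open Finset in
private lemma key_bound {m : ℕ} (E : V → V → Prop) [DecidableRel E]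
    (hirr : Irreflexive E) (hsc : Semicomplete E)
    (d l k : ℕ) (hl : 0 < l) (hk : 0 < k)
    (T : Finset V) (hT : IsDegTangle E d l k T)
    (X : Fin m → Finset V) (hX : IsPathDecomp E X) :
    l + 1 ≤ 2 * (Finset.univ.sup fun i => (X i).card) + k := by
  obtain ⟨hcov, hedge, hmono⟩ := hX
  obtain ⟨hTcard, hdeg⟩ := hT
  set t := Finset.univ.sup (fun i => (X i).card) with ht
  have hsupp : ∀ v : V, (Finset.univ.filter fun i => v ∈ X i).Nonempty := by
    intro v; obtain ⟨i, hi⟩ := hcov v; exact ⟨i, by simp [hi]⟩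
  set f : V → Fin m := fun v => (Finset.univ.filter fun i => v ∈ X i).min' (hsupp v) with hf
  set g : V → Fin m := fun v => (Finset.univ.filter fun i => v ∈ X i).max' (hsupp v) with hg
  have hmemf : ∀ v, v ∈ X (f v) := by
    intro v; have := Finset.min'_mem _ (hsupp v); simpa [hf] using this
  have hmemg : ∀ v, v ∈ X (g v) := by
    intro v; have := Finset.max'_mem _ (hsupp v); simpa [hg] using this
  have hfg : ∀ v, f v ≤ g v := by
    intro v
    exact Finset.min'_le _ _ (by simpa using hmemg v)
  have hint : ∀ v (j : Fin m), f v ≤ j → j ≤ g v → v ∈ X j :=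
    fun v j h1 h2 => hmono v (f v) j (g v) h1 h2 (hmemf v) (hmemg v)
  have hE : ∀ u v, E u v → f v ≤ g u := by
    intro u v huv
    obtain ⟨i, j, hji, hui, hvj⟩ := hedge u v huv
    have h1 : f v ≤ j := Finset.min'_le _ _ (by simp [hvj])
    have h2 : i ≤ g u := Finset.le_max' _ _ (by simp [hui])
    exact h1.trans (hji.trans h2)
  have hbag : ∀ (i : Fin m), (X i).card ≤ t := fun i => Finset.le_sup (f := fun i => (X i).card) (Finset.mem_univ i)
  have hTne : T.Nonempty := Finset.card_pos.mp (hTcard ▸ hl)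
  obtain ⟨a, haT, hamin⟩ := T.exists_min_image g hTne
  obtain ⟨b, hbT, hbmax⟩ := T.exists_max_image f hTne
  rcases le_or_gt (f b) (g a) with hcase | hcase
  · -- all of T is in the bag X (g a)
    have hTsub : T ⊆ X (g a) := by
      intro v hv
      exact hint v (g a) (le_trans (hbmax v hv) hcase) (hamin v hv)
    have h1 : l ≤ t := le_trans (hTcard ▸ Finset.card_le_card hTsub) (hbag (g a))
    omega
  · set i0 : Fin m := g a with hi0
    set i1 : Fin m := f b with hi1
    set FF := Finset.univ.filter (fun w => f w ≤ i0) with hFF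
    set GG := Finset.univ.filter (fun w => g w < i1) with hGG
    set L := Finset.univ.filter (fun w => f w ≤ i0 ∧ i1 ≤ g w) with hL
    set W := Finset.univ.filter (fun w => i0 < f w ∧ g w < i1) with hW
    set TF := T.filter (fun v => f v ≤ i0) with hTF
    set TG := T.filter (fun v => i0 < f v ∧ i1 ≤ g v) with hTG
    set TW := T.filter (fun v => i0 < f v ∧ g v < i1) with hTW
    -- (1) d + 1 ≤ FF.card
    have h1 : d + 1 ≤ FF.card := by
      have hsub : insert a (NoutV E a) ⊆ FF := by
        intro w hw
        rcases Finset.mem_insert.mp hw with rfl | hw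
        · simp only [hFF, Finset.mem_filter, Finset.mem_univ, true_and]
          exact hfg w
        · simp only [NoutV, Finset.mem_filter, Finset.mem_univ, true_and] at hw
          simp only [hFF, Finset.mem_filter, Finset.mem_univ, true_and]
          exact hE a w hw
      have hnm : a ∉ NoutV E a := by
        simp [NoutV, hirr a]
      have := Finset.card_le_card hsub
      rw [Finset.card_insert_of_notMem hnm] at this
      have hda : d ≤ dOutV E a := (hdeg a haT).1
      simp only [dOutV] at hda
      omega
    -- (2) GG.card ≤ d + k
    have h2 : GG.card ≤ d + k := by
      have hsub : GG ⊆ NoutV E b := by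
        intro w hw
        simp only [hGG, Finset.mem_filter, Finset.mem_univ, true_and] at hw
        have hne : w ≠ b := by
          rintro rfl
          exact absurd (hfg w) (not_le.mpr hw)
        have hnE : ¬ E w b := fun hwb => absurd (hE w b hwb) (not_le.mpr hw)
        have : E b w := (hsc w b hne).resolve_left hnE
        simp only [NoutV, Finset.mem_filter, Finset.mem_univ, true_and]
        exact this
      have := Finset.card_le_card hsub
      have hdb : dOutV E b ≤ d + k := (hdeg b hbT).2
      simp only [dOutV] at hdb
      omega
    -- (3) FF.card + W.card ≤ GG.card + L.card
    have h3 : FF.card + W.card ≤ GG.card + L.card := by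
      have hsub : (FF \ L) ∪ W ⊆ GG := by
        intro w hw
        simp only [hFF, hL, hW, hGG, Finset.mem_union, Finset.mem_sdiff,
          Finset.mem_filter, Finset.mem_univ, true_and] at hw ⊢
        rcases hw with ⟨h4, h5⟩ | ⟨_, h5⟩
        · by_contra h6
          exact h5 ⟨h4, not_lt.mp h6⟩
        · exact h5
      have hdisj : Disjoint (FF \ L) W := by
        rw [Finset.disjoint_left]
        intro w hw hw'
        simp only [hFF, Finset.mem_sdiff, Finset.mem_filter, Finset.mem_univ, true_and] at hw
        simp only [hW, Finset.mem_filter, Finset.mem_univ, true_and] at hw'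
        exact absurd hw.1 (not_le.mpr hw'.1)
      have hcardu : (FF \ L).card + W.card ≤ GG.card := by
        rw [← Finset.card_union_of_disjoint hdisj]
        exact Finset.card_le_card hsub
      have := Finset.card_le_card_sdiff_add_card (s := FF) (t := L)
      omega
    -- (4) l ≤ TW.card + TF.card + TG.card
    have h4 : l ≤ TW.card + TF.card + TG.card := by
      have hsub : T ⊆ TW ∪ TF ∪ TG := by
        intro v hv
        simp only [hTW, hTF, hTG, Finset.mem_union, Finset.mem_filter]
        rcases le_or_gt (f v) i0 with h | h
        · exact Or.inl (Or.inr ⟨hv, h⟩)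
        · rcases lt_or_ge (g v) i1 with h' | h'
          · exact Or.inl (Or.inl ⟨hv, h, h'⟩)
          · exact Or.inr ⟨hv, h, h'⟩
      calc l = T.card := hTcard.symm
        _ ≤ (TW ∪ TF ∪ TG).card := Finset.card_le_card hsub
        _ ≤ (TW ∪ TF).card + TG.card := Finset.card_union_le _ _
        _ ≤ TW.card + TF.card + TG.card := by
            have := Finset.card_union_le TW TF
            omega
    -- (5) TW ⊆ W
    have h5 : TW.card ≤ W.card := by
      apply Finset.card_le_card
      intro v hv
      simp only [hTW, Finset.mem_filter] at hv
      simp only [hW, Finset.mem_filter, Finset.mem_univ, true_and]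
      exact hv.2
    -- (6) L.card split
    have h6 : (L ∩ T).card + (L \ T).card = L.card := Finset.card_inter_add_card_sdiff L T
    -- (7) (L \ T) ∪ TF ⊆ X i0, disjoint
    have h7 : (L \ T).card + TF.card ≤ t := by
      have hsub : (L \ T) ∪ TF ⊆ X i0 := by
        intro w hw
        rcases Finset.mem_union.mp hw with hw | hw
        · rw [Finset.mem_sdiff] at hw
          obtain ⟨hw1, _⟩ := hw
          simp only [hL, Finset.mem_filter, Finset.mem_univ, true_and] at hw1
          exact hint w i0 hw1.1 (le_of_lt (lt_of_lt_of_le hcase hw1.2))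
        · simp only [hTF, Finset.mem_filter] at hw
          exact hint w i0 hw.2 (hamin w hw.1)
      have hdisj : Disjoint (L \ T) TF := by
        rw [Finset.disjoint_left]
        intro w hw hw'
        rw [Finset.mem_sdiff] at hw
        simp only [hTF, Finset.mem_filter] at hw'
        exact hw.2 hw'.1
      calc (L \ T).card + TF.card = ((L \ T) ∪ TF).card :=
            (Finset.card_union_of_disjoint hdisj).symm
        _ ≤ (X i0).card := Finset.card_le_card hsub
        _ ≤ t := hbag i0
    -- (8) (L ∩ T) ∪ TG ⊆ X i1, disjoint
    have h8 : (L ∩ T).card + TG.card ≤ t := by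
      have hsub : (L ∩ T) ∪ TG ⊆ X i1 := by
        intro w hw
        rcases Finset.mem_union.mp hw with hw | hw
        · rw [Finset.mem_inter] at hw
          obtain ⟨hw1, _⟩ := hw
          simp only [hL, Finset.mem_filter, Finset.mem_univ, true_and] at hw1
          exact hint w i1 (le_of_lt (lt_of_le_of_lt hw1.1 hcase)) hw1.2
        · simp only [hTG, Finset.mem_filter] at hw
          exact hint w i1 (hbmax w hw.1) hw.2.2
      have hdisj : Disjoint (L ∩ T) TG := by
        rw [Finset.disjoint_left]
        intro w hw hw'
        rw [Finset.mem_inter] at hw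
        simp only [hL, Finset.mem_filter, Finset.mem_univ, true_and] at hw
        simp only [hTG, Finset.mem_filter] at hw'
        exact absurd hw.1.1 (not_le.mpr hw'.2.1)
      calc (L ∩ T).card + TG.card = ((L ∩ T) ∪ TG).card :=
            (Finset.card_union_of_disjoint hdisj).symm
        _ ≤ (X i1).card := Finset.card_le_card hsub
        _ ≤ t := hbag i1
    omega

/-- If a semicomplete digraph has an `(l,k)`-degree tangle then
`pw(G) ≥ (l − k − 1)/2`. -/
theorem pathwidth_ge_of_degree_tangle (E : V → V → Prop) [DecidableRel E]
    (hirr : Irreflexive E) (hsc : Semicomplete E)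
    (d l k : ℕ) (hl : 0 < l) (hk : 0 < k)
    (T : Finset V) (hT : IsDegTangle E d l k T) :
    ((l : ℝ) - k - 1) / 2 ≤ (pathwidth E : ℝ) := by
  have hSne : {k' | ∃ (m : ℕ) (X : Fin m → Finset V), IsPathDecomp E X ∧ pdWidth X = k'}.Nonempty := by
    refine ⟨pdWidth (fun _ : Fin 1 => (Finset.univ : Finset V)), 1, _, ?_, rfl⟩
    exact ⟨fun v => ⟨0, Finset.mem_univ v⟩,
      fun u v _ => ⟨0, 0, le_refl 0, Finset.mem_univ u, Finset.mem_univ v⟩,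
      fun v i j k' _ _ _ _ => Finset.mem_univ v⟩
  have hmem : pathwidth E ∈ {k' | ∃ (m : ℕ) (X : Fin m → Finset V), IsPathDecomp E X ∧ pdWidth X = k'} :=
    Nat.sInf_mem hSne
  obtain ⟨m, X, hX, hw⟩ := hmem
  have hkey := key_bound E hirr hsc d l k hl hk T hT X hX
  have ht1 : 1 ≤ Finset.univ.sup fun i => (X i).card := by
    have hTne : T.Nonempty := Finset.card_pos.mp (hT.1 ▸ hl)
    obtain ⟨v, hv⟩ := hTne
    obtain ⟨i, hi⟩ := hX.1 v
    calc 1 ≤ (X i).card := Finset.card_pos.mpr ⟨v, hi⟩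
      _ ≤ _ := Finset.le_sup (f := fun i => (X i).card) (Finset.mem_univ i)
  have hwidth : pdWidth X = (Finset.univ.sup fun i => (X i).card) - 1 := rfl
  have hfin : l ≤ 2 * pathwidth E + k + 1 := by omega
  have hcast : (l : ℝ) ≤ 2 * (pathwidth E : ℝ) + k + 1 := by exact_mod_cast hfin
  linarith

end AlmostSemicomplete
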